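/- Let μ > 0, p > 1 and a ∈ ℝ. Let f : ℝ → ℝ be continuously differentiable on [a,∞), assume that t ↦ |f'(t)|^p·e^{μt} is integrable on [a,∞), and let c be the limit of f(t) as t → ∞ (which exists). Then ∫_a^∞ |f(t) − c|^p · e^{μt} dt ≤ (p/μ)^p · ∫_a^∞ |f'(t)|^p · e^{μt} dt. -/

import Mathlib

open Set Real Filter MeasureTheory Topology
open scoped ENNReal NNReal

/-- integral of decaying exponential on a half-line -/
lemma aux_integral_exp_neg_mul_Ioi {b : ℝ} (hb : 0 < b) (t : ℝ) :
    ∫ s in Ioi t, Real.exp (-b * s) = Real.exp (-b * t) / b := by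
  have hderiv : ∀ x ∈ Ici t, HasDerivAt (fun s : ℝ => -Real.exp (-b * s) / b)
      (Real.exp (-b * x)) x := by
    intro x _
    have h1 : HasDerivAt (fun s : ℝ => -b * s) (-b) x := by
      simpa using (hasDerivAt_id x).const_mul (-b)
    have h2 := (Real.hasDerivAt_exp (-b * x)).comp x h1
    have h3 := (h2.div_const b).neg
    simpa [Function.comp, Pi.neg_def, neg_div, mul_neg, neg_neg, mul_div_assoc, div_self hb.ne']
      using h3
  have hint : IntegrableOn (fun s : ℝ => Real.exp (-b * s)) (Ioi t) :=
    exp_neg_integrableOn_Ioi t hb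
  have htend : Tendsto (fun s : ℝ => -Real.exp (-b * s) / b) atTop (𝓝 0) := by
    have h0 : Tendsto (fun s : ℝ => Real.exp (-b * s)) atTop (𝓝 0) := by
      have : Tendsto (fun s : ℝ => -b * s) atTop atBot :=
        Tendsto.const_mul_atTop_of_neg (neg_neg_iff_pos.mpr hb) tendsto_id
      exact Real.tendsto_exp_atBot.comp this
    simpa using (h0.neg).div_const b
  have := MeasureTheory.integral_Ioi_of_hasDerivAt_of_tendsto' hderiv hint htend
  rw [this]
  field_simp
  ring

/-- Memℒp from integrability of the p-th power, for nonnegative functions -/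
lemma aux_memLp_of_pow_integrable {p : ℝ} (hp : 0 < p) {s : Set ℝ} {ψ : ℝ → ℝ}
    (hmeas : AEStronglyMeasurable ψ (volume.restrict s)) (h0 : ∀ x, 0 ≤ ψ x)
    (hint : IntegrableOn (fun x => ψ x ^ p) s) :
    MemLp ψ (ENNReal.ofReal p) (volume.restrict s) := by
  have hp0 : ENNReal.ofReal p ≠ 0 := by simp [ENNReal.ofReal_eq_zero, not_le, hp]
  have hpt : ENNReal.ofReal p ≠ ⊤ := ENNReal.ofReal_ne_top
  have := (memLp_norm_rpow_iff (q := ENNReal.ofReal p) (p := ENNReal.ofReal p)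
    hmeas hp0 hpt)
  rw [ENNReal.div_self hp0 hpt, ENNReal.toReal_ofReal hp.le] at this
  rw [← this, memLp_one_iff_integrable]
  have : (fun x => ‖ψ x‖ ^ p) = fun x => ψ x ^ p := by
    funext x; rw [Real.norm_of_nonneg (h0 x)]
  rw [this]
  exact hint

theorem stmt_5
    (μ p a : ℝ) (hμ : 0 < μ) (hp : 1 < p)
    (f f' : ℝ → ℝ)
    (hderiv : ∀ t ∈ Ici a, HasDerivWithinAt f (f' t) (Ici a) t)
    (hcont : ContinuousOn f' (Ici a))
    (hint : IntegrableOn (fun t => |f' t| ^ p * Real.exp (μ * t)) (Ici a))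
    (c : ℝ) (hlim : Tendsto f atTop (nhds c)) :
    ∫ t in Ici a, |f t - c| ^ p * Real.exp (μ * t) ≤
      (p / μ) ^ p * ∫ t in Ici a, |f' t| ^ p * Real.exp (μ * t) := by
  have hp0 : (0:ℝ) < p := one_pos.trans hp
  have hp1 : p - 1 ≠ 0 := sub_ne_zero.mpr (ne_of_gt hp)
  have hpne : p ≠ 0 := hp0.ne'
  set q : ℝ := p / (p - 1) with hqdef
  have hpq : p.HolderConjugate q := (Real.holderConjugate_iff_eq_conjExponent hp).2 hqdef
  have hq0 : 0 < q := hpq.symm.pos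
  -- basic continuity facts
  have hfc : ContinuousOn f (Ici a) := fun x hx => (hderiv x hx).continuousWithinAt
  have hw_cont : Continuous fun t : ℝ => Real.exp (μ * t) :=
    Real.continuous_exp.comp (continuous_const.mul continuous_id)
  have hint' : IntegrableOn (fun t => |f' t| ^ p * Real.exp (μ * t)) (Ioi a) :=
    hint.mono_set Ioi_subset_Ici_self
  -- the functions for Hölder on tails
  set φ : ℝ → ℝ := fun t => |f' t| * Real.exp (μ * t) ^ p⁻¹ with hφdef
  set ψ : ℝ → ℝ := fun t => Real.exp (-(μ / p) * t) with hψdef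
  set F : ℝ → ℝ := fun t => ∫ s in Ioi t, |f' s| with hFdef
  set Y : ℝ := ∫ t in Ioi a, |f' t| ^ p * Real.exp (μ * t) with hYdef
  set T : ℝ → ℝ := fun R => ∫ s in Ioi R, |f' s| ^ p * Real.exp (μ * s) with hTdef
  have hYnn : 0 ≤ Y := setIntegral_nonneg measurableSet_Ioi (fun x _ => by positivity)
  have hTnn : ∀ R, 0 ≤ T R := fun R =>
    setIntegral_nonneg measurableSet_Ioi (fun x _ => by positivity)
  have hT_le_Y : ∀ R, a ≤ R → T R ≤ Y := by
    intro R hR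
    exact setIntegral_mono_set hint' (Eventually.of_forall (fun x => by positivity))
      (HasSubset.Subset.eventuallyLE (Ioi_subset_Ioi hR))
  have hφcont : ContinuousOn φ (Ici a) :=
    hcont.abs.mul ((hw_cont.continuousOn).rpow_const fun x _ => Or.inr (by positivity))
  have hφp : ∀ t, φ t ^ p = |f' t| ^ p * Real.exp (μ * t) := by
    intro t
    rw [hφdef]
    rw [Real.mul_rpow (abs_nonneg _) (Real.rpow_nonneg (Real.exp_pos _).le _),
      ← Real.rpow_mul (Real.exp_pos _).le, inv_mul_cancel₀ hpne, Real.rpow_one]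
  have hψq : ∀ t, ψ t ^ q = Real.exp (-(μ * q / p) * t) := by
    intro t
    rw [hψdef, ← Real.exp_mul]
    congr 1
    ring
  have hφψ : ∀ t, φ t * ψ t = |f' t| := by
    intro t
    simp only [hφdef, hψdef]
    rw [← Real.exp_mul, mul_assoc, ← Real.exp_add]
    have : μ * t * p⁻¹ + -(μ / p) * t = 0 := by ring
    rw [this, Real.exp_zero, mul_one]
  have hrate : 0 < μ * q / p := by positivity
  -- Memℒp facts on tails
  have hφLp : ∀ t, a ≤ t → MemLp φ (ENNReal.ofReal p) (volume.restrict (Ioi t)) := by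
    intro t ht
    refine aux_memLp_of_pow_integrable hp0 ?_ (fun x => by positivity) ?_
    · exact ((hφcont.mono (fun x hx => ht.trans hx.le)).aestronglyMeasurable
        measurableSet_Ioi)
    · have : (fun x => φ x ^ p) = fun x => |f' x| ^ p * Real.exp (μ * x) := funext hφp
      rw [this]
      exact hint.mono_set (fun x hx => ht.trans hx.le)
  have hψLp : ∀ t, MemLp ψ (ENNReal.ofReal q) (volume.restrict (Ioi t)) := by
    intro t
    refine aux_memLp_of_pow_integrable hq0 ?_ (fun x => (Real.exp_pos _).le) ?_
    · exact (Real.continuous_exp.comp (continuous_const.mul continuous_id)).aestronglyMeasurable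
    · have : (fun x => ψ x ^ q) = fun x => Real.exp (-(μ * q / p) * x) := funext hψq
      rw [this]
      exact exp_neg_integrableOn_Ioi t hrate
  -- |f'| is integrable on tails
  have habs_int : ∀ t, a ≤ t → IntegrableOn (fun s => |f' s|) (Ioi t) := by
    intro t ht
    have h1 : (1 : ℝ≥0∞) / 1 = 1 / ENNReal.ofReal p + 1 / ENNReal.ofReal q := by
      rw [one_div, one_div, one_div, inv_one, hpq.inv_add_inv_ennreal]
    haveI : ENNReal.HolderTriple (ENNReal.ofReal p) (ENNReal.ofReal q) 1 :=
      ⟨by rw [inv_one]; exact hpq.inv_add_inv_ennreal⟩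
    have h2 := ((hψLp t).smul (hφLp t ht) :
      MemLp (φ • ψ) 1 (volume.restrict (Ioi t)))
    have h3 := memLp_one_iff_integrable.mp h2
    refine h3.congr (Eventually.of_forall (fun x => ?_))
    simp only [Pi.smul_apply, smul_eq_mul]
    exact hφψ x
  -- Hölder bound for the tail integral of |f'|
  have hhold : ∀ t, a ≤ t → F t ≤ T t ^ (1/p) * (∫ s in Ioi t, ψ s ^ q) ^ (1/q) := by
    intro t ht
    have h := integral_mul_le_Lp_mul_Lq_of_nonneg hpq
      (μ := volume.restrict (Ioi t))
      (Eventually.of_forall (fun x => by positivity : ∀ x, 0 ≤ φ x))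
      (Eventually.of_forall (fun x => (Real.exp_pos _).le : ∀ x, 0 ≤ ψ x))
      (hφLp t ht) (hψLp t)
    have e1 : ∫ x in Ioi t, φ x * ψ x = F t := by
      rw [hFdef]
      exact setIntegral_congr_fun measurableSet_Ioi (fun x _ => hφψ x)
    have e2 : ∫ x in Ioi t, φ x ^ p = T t := by
      rw [hTdef]
      exact setIntegral_congr_fun measurableSet_Ioi (fun x _ => hφp x)
    rw [e1, e2] at h
    exact h
  have hBq : ∀ t, (∫ s in Ioi t, ψ s ^ q) = Real.exp (-(μ * q / p) * t) / (μ * q / p) := by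
    intro t
    have : (fun s => ψ s ^ q) = fun s => Real.exp (-(μ * q / p) * s) := funext hψq
    rw [this]
    exact aux_integral_exp_neg_mul_Ioi hrate t
  -- F basics
  have hFnonneg : ∀ t, 0 ≤ F t := fun t =>
    setIntegral_nonneg measurableSet_Ioi (fun x _ => abs_nonneg _)
  -- boundary decay bound
  set D : ℝ := (μ * q / p) ^ ((1/q) * p) with hDdef
  have hD0 : 0 < D := Real.rpow_pos_of_pos hrate _
  have hFb : ∀ R, a ≤ R → F R ^ p * Real.exp (μ * R) ≤ T R / D := by
    intro R hR
    have h0 := hhold R hR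
    rw [hBq R] at h0
    have h1 : F R ^ p ≤ (T R ^ (1/p) * (Real.exp (-(μ * q / p) * R) / (μ * q / p)) ^ (1/q)) ^ p :=
      Real.rpow_le_rpow (hFnonneg R) h0 hp0.le
    have h2 : (T R ^ (1/p) * (Real.exp (-(μ * q / p) * R) / (μ * q / p)) ^ (1/q)) ^ p
        = T R * (Real.exp (-(μ * q / p) * R) ^ ((1/q) * p) / D) := by
      rw [Real.mul_rpow (Real.rpow_nonneg (hTnn R) _) (Real.rpow_nonneg (by positivity) _),
        ← Real.rpow_mul (hTnn R), one_div, inv_mul_cancel₀ hpne, Real.rpow_one,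
        ← Real.rpow_mul (by positivity), Real.div_rpow (Real.exp_pos _).le hrate.le, hDdef]
    have h3 : Real.exp (-(μ * q / p) * R) ^ ((1/q) * p) = Real.exp (-(μ * R)) := by
      rw [← Real.exp_mul]
      congr 1
      field_simp
    rw [h2, h3] at h1
    calc F R ^ p * Real.exp (μ * R)
        ≤ T R * (Real.exp (-(μ * R)) / D) * Real.exp (μ * R) :=
          mul_le_mul_of_nonneg_right h1 (Real.exp_pos _).le
      _ = T R / D * (Real.exp (-(μ * R)) * Real.exp (μ * R)) := by ring
      _ = T R / D := by rw [← Real.exp_add, neg_add_cancel, Real.exp_zero, mul_one]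
  -- the tail of the weighted integral tends to 0
  have hTtend : Tendsto T atTop (𝓝 0) := by
    have h1 : Tendsto (fun R => ∫ s in a..R, |f' s| ^ p * Real.exp (μ * s)) atTop (𝓝 Y) :=
      intervalIntegral_tendsto_integral_Ioi a hint' tendsto_id
    have h2 : ∀ R, a ≤ R → T R = Y - ∫ s in a..R, |f' s| ^ p * Real.exp (μ * s) := by
      intro R hR
      have hsplit := setIntegral_union (f := fun s => |f' s| ^ p * Real.exp (μ * s))
        (μ := volume) (Set.Ioc_disjoint_Ioi le_rfl) measurableSet_Ioi
        (hint'.mono_set Ioc_subset_Ioi_self) (hint'.mono_set (Ioi_subset_Ioi hR))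
      rw [Set.Ioc_union_Ioi_eq_Ioi hR] at hsplit
      rw [intervalIntegral.integral_of_le hR, hTdef, hYdef]
      simp only at hsplit ⊢
      linarith [hsplit]
    have h3 : Tendsto (fun R => Y - ∫ s in a..R, |f' s| ^ p * Real.exp (μ * s)) atTop
        (𝓝 (Y - Y)) := tendsto_const_nhds.sub h1
    rw [sub_self] at h3
    exact h3.congr' (by filter_upwards [eventually_ge_atTop a] with R hR using (h2 R hR).symm)
  -- F t = F a - primitive
  have habs_int_a := habs_int a le_rfl
  have hFeq : ∀ t, a ≤ t → F t = F a - ∫ s in a..t, |f' s| := by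
    intro t ht
    have hsplit := setIntegral_union (f := fun s => |f' s|) (μ := volume)
      (Set.Ioc_disjoint_Ioi le_rfl) measurableSet_Ioi
      (habs_int_a.mono_set Ioc_subset_Ioi_self) (habs_int_a.mono_set (Ioi_subset_Ioi ht))
    rw [Set.Ioc_union_Ioi_eq_Ioi ht] at hsplit
    rw [intervalIntegral.integral_of_le ht, hFdef]
    simp only at hsplit ⊢
    linarith [hsplit]
  -- continuity of F on [a, ∞)
  have hFcont : ContinuousOn F (Ici a) := by
    intro x hx
    have hx' : a ≤ x := hx
    have hintc : IntegrableOn (fun s => |f' s|) (Icc a (x+1)) :=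
      (hcont.abs.mono Icc_subset_Ici_self).integrableOn_compact isCompact_Icc
    have hGc : ContinuousOn (fun y => ∫ s in Ioc a y, |f' s|) (Icc a (x+1)) :=
      intervalIntegral.continuousOn_primitive hintc
    have hGc2 : ContinuousWithinAt (fun y => F a - ∫ s in Ioc a y, |f' s|) (Icc a (x+1)) x :=
      (continuousWithinAt_const.sub (hGc x ⟨hx', by linarith⟩))
    have heq : ∀ y ∈ Icc a (x+1), F y = F a - ∫ s in Ioc a y, |f' s| := by
      intro y hy
      rw [hFeq y hy.1, intervalIntegral.integral_of_le hy.1]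
    have h1 : ContinuousWithinAt F (Icc a (x+1)) x :=
      hGc2.congr heq (heq x ⟨hx', by linarith⟩)
    refine h1.mono_of_mem_nhdsWithin ?_
    rw [← Set.Ici_inter_Iic]
    exact inter_mem self_mem_nhdsWithin
      (mem_nhdsWithin_of_mem_nhds (Iic_mem_nhds (lt_add_one x)))
  -- derivative of F
  have hFderiv : ∀ x ∈ Ioi a, HasDerivAt F (-|f' x|) x := by
    intro x hx
    have haX : a < x := hx
    have hii : IntervalIntegrable (fun s => |f' s|) volume a x := by
      apply ContinuousOn.intervalIntegrable
      rw [uIcc_of_le haX.le]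
      exact hcont.abs.mono (fun y hy => hy.1)
    have hmeas : StronglyMeasurableAtFilter (fun s => |f' s|) (𝓝 x) :=
      ⟨Ici a, Ici_mem_nhds haX, (hcont.abs).aestronglyMeasurable measurableSet_Ici⟩
    have hca : ContinuousAt (fun s => |f' s|) x :=
      (hcont.abs).continuousAt (Ici_mem_nhds haX)
    have hG := intervalIntegral.integral_hasDerivAt_right hii hmeas hca
    have hG2 : HasDerivAt (fun t => F a - ∫ s in a..t, |f' s|) (-|f' x|) x := hG.const_sub (F a)
    refine hG2.congr_of_eventuallyEq ?_
    filter_upwards [isOpen_Ioi.mem_nhds hx] with y hy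
    exact hFeq y (le_of_lt hy)
  -- FTC for f
  have hfR : ∀ t, a ≤ t → ∀ R, t ≤ R → f R - f t = ∫ s in t..R, f' s := by
    intro t ht R hR
    refine (intervalIntegral.integral_eq_sub_of_hasDeriv_right_of_le hR
      (hfc.mono (fun y hy => ht.trans hy.1)) ?_ ?_).symm
    · intro x hx
      exact (hderiv x (ht.trans hx.1.le)).mono
        (fun y hy => (ht.trans hx.1.le).trans hy.le)
    · apply ContinuousOn.intervalIntegrable
      rw [uIcc_of_le hR]
      exact hcont.mono (fun y hy => ht.trans hy.1)
  -- pointwise bound |f t - c| ≤ F t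
  have hgF : ∀ t, a ≤ t → |f t - c| ≤ F t := by
    intro t ht
    have hev : ∀ᶠ R in atTop, |f t - c| ≤ F t + |f R - c| := by
      filter_upwards [eventually_ge_atTop t] with R hR
      have h1 : |f t - c| ≤ |f t - f R| + |f R - c| := by
        have := abs_sub_abs_le_abs_sub (f t - c) (f R - c)
        calc |f t - c| = |(f t - f R) + (f R - c)| := by ring_nf
          _ ≤ |f t - f R| + |f R - c| := abs_add_le _ _
      have h2 : |f t - f R| ≤ F t := by
        rw [abs_sub_comm, hfR t ht R hR]
        calc |∫ s in t..R, f' s| ≤ ∫ s in t..R, |f' s| :=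
              intervalIntegral.abs_integral_le_integral_abs hR
          _ = ∫ s in Ioc t R, |f' s| := intervalIntegral.integral_of_le hR
          _ ≤ F t := setIntegral_mono_set (habs_int t ht)
              (Eventually.of_forall (fun x => abs_nonneg _))
              (HasSubset.Subset.eventuallyLE Ioc_subset_Ioi_self)
      linarith
    have htend : Tendsto (fun R => F t + |f R - c|) atTop (𝓝 (F t + 0)) := by
      refine tendsto_const_nhds.add ?_
      have : Tendsto (fun R => f R - c) atTop (𝓝 (c - c)) := hlim.sub_const c
      rw [sub_self] at this
      simpa using this.abs
    rw [add_zero] at htend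
    exact ge_of_tendsto htend hev
  -- interval quantities
  set X : ℝ → ℝ := fun R => ∫ t in Ioc a R, F t ^ p * Real.exp (μ * t) with hXdef
  have hXnn : ∀ R, 0 ≤ X R := fun R =>
    setIntegral_nonneg measurableSet_Ioc
      (fun x _ => mul_nonneg (Real.rpow_nonneg (hFnonneg x) p) (Real.exp_pos _).le)
  have hFppos : ∀ x, 0 ≤ F x ^ p * Real.exp (μ * x) := fun x =>
    mul_nonneg (Real.rpow_nonneg (hFnonneg x) p) (Real.exp_pos _).le
  -- continuity of the main integrands on [a, ∞)
  have hFp_cont : ContinuousOn (fun t => F t ^ p * Real.exp (μ * t)) (Ici a) :=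
    (hFcont.rpow_const (fun x _ => Or.inr hp0.le)).mul hw_cont.continuousOn
  have hFp1_cont : ContinuousOn (fun t => F t ^ (p-1) * (|f' t| * Real.exp (μ * t))) (Ici a) :=
    (hFcont.rpow_const (fun x _ => Or.inr (by linarith))).mul
      (hcont.abs.mul hw_cont.continuousOn)
  -- the key integration-by-parts + Hölder estimate
  have key : ∀ R, a ≤ R →
      X R ≤ F R ^ p * Real.exp (μ * R) / μ + (p / μ) * (Y ^ (1/p) * X R ^ (1/q)) := by
    intro R hR
    have hIccIci : Icc a R ⊆ Ici a := fun y hy => hy.1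
    have hIocIci : Ioc a R ⊆ Ici a := fun y hy => hy.1.le
    -- integration by parts via FTC
    set Φ : ℝ → ℝ := fun t => F t ^ p * Real.exp (μ * t) / μ with hΦdef
    set E : ℝ → ℝ := fun x => F x ^ p * Real.exp (μ * x)
      - (p / μ) * (F x ^ (p-1) * (|f' x| * Real.exp (μ * x))) with hEdef
    have hΦcont : ContinuousOn Φ (Icc a R) :=
      ((hFp_cont.mono hIccIci).div_const μ)
    have hEcont : ContinuousOn E (Icc a R) :=
      (hFp_cont.mono hIccIci).sub (((hFp1_cont.mono hIccIci)).const_smul (p/μ))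
    have hΦd : ∀ x ∈ Ioo a R, HasDerivAt Φ (E x) x := by
      intro x hx
      have hd1 : HasDerivAt (fun t => F t ^ p) (p * F x ^ (p-1) * -|f' x|) x := by
        have h := (Real.hasDerivAt_rpow_const (x := F x) (p := p)
          (Or.inr hp.le)).comp x (hFderiv x hx.1)
        simpa [mul_assoc, Function.comp_def] using h
      have hd2 : HasDerivAt (fun t => Real.exp (μ * t)) (Real.exp (μ * x) * μ) x := by
        have h1 : HasDerivAt (fun t : ℝ => μ * t) μ x := by
          simpa using (hasDerivAt_id x).const_mul μ
        exact (Real.hasDerivAt_exp (μ * x)).comp x h1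
      have h := (hd1.mul hd2).div_const μ
      have heq : (p * F x ^ (p-1) * -|f' x| * Real.exp (μ * x)
          + F x ^ p * (Real.exp (μ * x) * μ)) / μ = E x := by
        rw [hEdef]
        field_simp
        ring
      rw [← heq]
      exact h
    have hEi : IntervalIntegrable E volume a R := by
      apply ContinuousOn.intervalIntegrable
      rwa [uIcc_of_le hR]
    have hFTC := intervalIntegral.integral_eq_sub_of_hasDeriv_right_of_le hR hΦcont
      (fun x hx => (hΦd x hx).hasDerivWithinAt) hEi
    -- split the integral
    have h1i : IntervalIntegrable (fun x => F x ^ p * Real.exp (μ * x)) volume a R := by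
      apply ContinuousOn.intervalIntegrable
      rw [uIcc_of_le hR]
      exact hFp_cont.mono hIccIci
    have h2i : IntervalIntegrable (fun x => F x ^ (p-1) * (|f' x| * Real.exp (μ * x)))
        volume a R := by
      apply ContinuousOn.intervalIntegrable
      rw [uIcc_of_le hR]
      exact hFp1_cont.mono hIccIci
    have hsplit : ∫ x in a..R, E x = (∫ x in a..R, F x ^ p * Real.exp (μ * x))
        - (p/μ) * ∫ x in a..R, F x ^ (p-1) * (|f' x| * Real.exp (μ * x)) := by
      rw [hEdef]
      rw [intervalIntegral.integral_sub h1i (h2i.const_mul (p/μ)),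
        intervalIntegral.integral_const_mul]
    have hXR : ∫ x in a..R, F x ^ p * Real.exp (μ * x) = X R := by
      rw [hXdef, intervalIntegral.integral_of_le hR]
    have hΦa : 0 ≤ Φ a := div_nonneg (hFppos a) hμ.le
    -- Hölder for the mixed term
    set u : ℝ → ℝ := fun t => F t ^ (p-1) * Real.exp (μ * t) ^ (q⁻¹) with hudef
    have hmix : ∀ t, φ t * u t = F t ^ (p-1) * (|f' t| * Real.exp (μ * t)) := by
      intro t
      simp only [hφdef, hudef]
      have : Real.exp (μ * t) ^ p⁻¹ * Real.exp (μ * t) ^ q⁻¹ = Real.exp (μ * t) := by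
        rw [← Real.rpow_add (Real.exp_pos _), hpq.inv_add_inv_eq_one, Real.rpow_one]
      calc |f' t| * Real.exp (μ * t) ^ p⁻¹ * (F t ^ (p-1) * Real.exp (μ * t) ^ q⁻¹)
          = F t ^ (p-1) * (|f' t| * (Real.exp (μ * t) ^ p⁻¹ * Real.exp (μ * t) ^ q⁻¹)) := by
            ring
        _ = F t ^ (p-1) * (|f' t| * Real.exp (μ * t)) := by rw [this]
    have huq : ∀ t, u t ^ q = F t ^ p * Real.exp (μ * t) := by
      intro t
      simp only [hudef]
      rw [Real.mul_rpow (Real.rpow_nonneg (hFnonneg t) _)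
          (Real.rpow_nonneg (Real.exp_pos _).le _),
        ← Real.rpow_mul (hFnonneg t), ← Real.rpow_mul (Real.exp_pos _).le,
        hpq.sub_one_mul_conj, inv_mul_cancel₀ hq0.ne', Real.rpow_one]
    -- finite measure instance
    haveI hfin : IsFiniteMeasure (volume.restrict (Ioc a R)) := by
      constructor
      rw [Measure.restrict_apply_univ]
      exact measure_Ioc_lt_top
    have hucont : ContinuousOn u (Icc a R) :=
      ((hFcont.mono hIccIci).rpow_const (fun x _ => Or.inr (by linarith))).mul
        ((hw_cont.continuousOn.rpow_const (fun x _ => Or.inr (by positivity))).mono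
          (fun y _ => trivial))
    have huLp : MemLp u (ENNReal.ofReal q) (volume.restrict (Ioc a R)) := by
      obtain ⟨C, hC⟩ := isCompact_Icc.exists_bound_of_continuousOn hucont
      refine MemLp.of_bound
        ((hucont.mono Ioc_subset_Icc_self).aestronglyMeasurable measurableSet_Ioc) C ?_
      filter_upwards [ae_restrict_mem measurableSet_Ioc] with x hx
      exact hC x (Ioc_subset_Icc_self hx)
    have hφLp' : MemLp φ (ENNReal.ofReal p) (volume.restrict (Ioc a R)) := by
      obtain ⟨C, hC⟩ := isCompact_Icc.exists_bound_of_continuousOn (hφcont.mono hIccIci)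
      refine MemLp.of_bound
        (((hφcont.mono hIccIci).mono Ioc_subset_Icc_self).aestronglyMeasurable
          measurableSet_Ioc) C ?_
      filter_upwards [ae_restrict_mem measurableSet_Ioc] with x hx
      exact hC x (Ioc_subset_Icc_self hx)
    have hhold2 := integral_mul_le_Lp_mul_Lq_of_nonneg hpq
      (μ := volume.restrict (Ioc a R))
      (Eventually.of_forall (fun x => by positivity : ∀ x, 0 ≤ φ x))
      (Eventually.of_forall (fun x =>
        mul_nonneg (Real.rpow_nonneg (hFnonneg x) _)
          (Real.rpow_nonneg (Real.exp_pos _).le _) : ∀ x, 0 ≤ u x))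
      hφLp' huLp
    have e1 : ∫ x in Ioc a R, φ x * u x
        = ∫ x in Ioc a R, F x ^ (p-1) * (|f' x| * Real.exp (μ * x)) :=
      setIntegral_congr_fun measurableSet_Ioc (fun x _ => hmix x)
    have e2 : ∫ x in Ioc a R, φ x ^ p = ∫ x in Ioc a R, |f' x| ^ p * Real.exp (μ * x) :=
      setIntegral_congr_fun measurableSet_Ioc (fun x _ => hφp x)
    have e3 : ∫ x in Ioc a R, u x ^ q = X R :=
      setIntegral_congr_fun measurableSet_Ioc (fun x _ => huq x)
    rw [e1, e2, e3] at hhold2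
    have hYR : ∫ x in Ioc a R, |f' x| ^ p * Real.exp (μ * x) ≤ Y :=
      setIntegral_mono_set hint' (Eventually.of_forall (fun x => by positivity))
        (HasSubset.Subset.eventuallyLE Ioc_subset_Ioi_self)
    have hYRnn : 0 ≤ ∫ x in Ioc a R, |f' x| ^ p * Real.exp (μ * x) :=
      setIntegral_nonneg measurableSet_Ioc (fun x _ => by positivity)
    have hH : ∫ x in Ioc a R, F x ^ (p-1) * (|f' x| * Real.exp (μ * x))
        ≤ Y ^ (1/p) * X R ^ (1/q) := by
      refine le_trans hhold2 ?_
      exact mul_le_mul_of_nonneg_right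
        (Real.rpow_le_rpow hYRnn hYR (by positivity))
        (Real.rpow_nonneg (hXnn R) _)
    -- put everything together
    have hIoc : ∫ x in a..R, F x ^ (p-1) * (|f' x| * Real.exp (μ * x))
        = ∫ x in Ioc a R, F x ^ (p-1) * (|f' x| * Real.exp (μ * x)) :=
      intervalIntegral.integral_of_le hR
    have : X R - (p/μ) * ∫ x in Ioc a R, F x ^ (p-1) * (|f' x| * Real.exp (μ * x))
        = Φ R - Φ a := by
      rw [← hXR, ← hIoc, ← hsplit]
      exact hFTC
    have hpm : 0 ≤ p / μ := by positivity
    have h5 : X R ≤ Φ R + (p/μ) * (Y ^ (1/p) * X R ^ (1/q)) := by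
      have h6 := mul_le_mul_of_nonneg_left hH hpm
      have h7 : Φ R - Φ a ≤ Φ R := by linarith
      linarith
    simpa [hΦdef] using h5
    -- uniform bound on X R
  set Z : ℝ := (p/μ)^p * Y with hZdef
  have hZnn : 0 ≤ Z := by positivity
  have hΦbound : ∀ R, a ≤ R → F R ^ p * Real.exp (μ * R) / μ ≤ Y / D / μ := by
    intro R hR
    have h1 : F R ^ p * Real.exp (μ * R) ≤ Y / D :=
      le_trans (hFb R hR) (by gcongr; exact hT_le_Y R hR)
    gcongr
  set C : ℝ := p * (Y / D / μ) + Z with hCdef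
  have hXC : ∀ R, a ≤ R → X R ≤ C := by
    intro R hR
    have hkey := key R hR
    have hyoung := Real.young_inequality_of_nonneg
      (Real.rpow_nonneg (hXnn R) (1/q)) (by positivity : (0:ℝ) ≤ (p/μ) * Y ^ (1/p)) hpq.symm
    have e1 : (X R ^ (1/q)) ^ q = X R := by
      rw [← Real.rpow_mul (hXnn R), one_div, inv_mul_cancel₀ hq0.ne', Real.rpow_one]
    have e2 : ((p/μ) * Y ^ (1/p)) ^ p = Z := by
      rw [Real.mul_rpow (by positivity) (Real.rpow_nonneg hYnn _),
        ← Real.rpow_mul hYnn, one_div, inv_mul_cancel₀ hpne, Real.rpow_one, hZdef]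
    rw [e1, e2] at hyoung
    have h3 : (p/μ) * (Y ^ (1/p) * X R ^ (1/q)) ≤ X R / q + Z / p := by
      calc (p/μ) * (Y ^ (1/p) * X R ^ (1/q))
          = X R ^ (1/q) * ((p/μ) * Y ^ (1/p)) := by ring
        _ ≤ X R / q + Z / p := hyoung
    have h4 : X R ≤ Y / D / μ + (X R / q + Z / p) := by
      have := hΦbound R hR
      linarith
    have hsum : X R * p⁻¹ + X R * q⁻¹ = X R := by
      rw [← mul_add, hpq.inv_add_inv_eq_one, mul_one]
    have h5 : X R * p⁻¹ ≤ Y / D / μ + Z / p := by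
      have hq' : X R / q = X R * q⁻¹ := div_eq_mul_inv _ _
      linarith
    have h6 := mul_le_mul_of_nonneg_right h5 hp0.le
    calc X R = X R * p⁻¹ * p := by rw [mul_assoc, inv_mul_cancel₀ hpne, mul_one]
      _ ≤ (Y / D / μ + Z / p) * p := h6
      _ = p * (Y / D / μ) + Z := by field_simp
      _ = C := hCdef.symm
  -- integrability of F^p * weight on (a, ∞)
  have h_int : IntegrableOn (fun t => F t ^ p * Real.exp (μ * t)) (Ioi a) := by
    refine integrableOn_Ioi_of_intervalIntegral_norm_bounded C a
      (b := fun n : ℕ => a + n) (l := atTop) (fun n => ?_) ?_ ?_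
    · exact ((hFp_cont.mono (fun y (hy : y ∈ Icc a (a + (n:ℝ))) => hy.1)).integrableOn_compact
        isCompact_Icc).mono_set Ioc_subset_Icc_self
    · exact tendsto_atTop_add_const_left _ a tendsto_natCast_atTop_atTop
    · refine Eventually.of_forall (fun n => ?_)
      have han : a ≤ a + (n:ℝ) := le_add_of_nonneg_right (Nat.cast_nonneg n)
      have heq : ∫ x in a..(a + (n:ℝ)), ‖F x ^ p * Real.exp (μ * x)‖ = X (a + (n:ℝ)) := by
        rw [hXdef, intervalIntegral.integral_of_le han]
        refine setIntegral_congr_fun measurableSet_Ioc (fun x _ => ?_)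
        exact Real.norm_of_nonneg (hFppos x)
      rw [heq]
      exact hXC _ han
  set Xinf : ℝ := ∫ t in Ioi a, F t ^ p * Real.exp (μ * t) with hXinfdef
  have hXinfnn : 0 ≤ Xinf := setIntegral_nonneg measurableSet_Ioi (fun x _ => hFppos x)
  have hXlim : Tendsto X atTop (𝓝 Xinf) := by
    have h1 := intervalIntegral_tendsto_integral_Ioi a h_int tendsto_id
    refine h1.congr' ?_
    filter_upwards [eventually_ge_atTop a] with R hR
    simp only [id_eq]
    rw [hXdef, intervalIntegral.integral_of_le hR]
  -- pass to the limit in the key inequality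
  have hRHSlim : Tendsto (fun R => F R ^ p * Real.exp (μ * R) / μ
      + (p / μ) * (Y ^ (1/p) * X R ^ (1/q))) atTop
      (𝓝 (0 + (p / μ) * (Y ^ (1/p) * Xinf ^ (1/q)))) := by
    refine Tendsto.add ?_ ?_
    · refine squeeze_zero' (g := fun R => T R / D / μ)
        (Eventually.of_forall (fun R => div_nonneg (hFppos R) hμ.le)) ?_ ?_
      · filter_upwards [eventually_ge_atTop a] with R hR
        exact (by gcongr; exact hFb R hR : F R ^ p * Real.exp (μ * R) / μ ≤ T R / D / μ)
      · have h2 := (hTtend.div_const D).div_const μ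
        simpa using h2
    · refine Tendsto.const_mul _ (Tendsto.const_mul _ ?_)
      exact ((Real.continuousAt_rpow_const Xinf (1/q) (Or.inr (by positivity))).tendsto.comp
        hXlim)
  have hfinal : Xinf ≤ 0 + (p / μ) * (Y ^ (1/p) * Xinf ^ (1/q)) := by
    refine le_of_tendsto_of_tendsto hXlim hRHSlim ?_
    filter_upwards [eventually_ge_atTop a] with R hR using key R hR
  rw [zero_add] at hfinal
  -- deduce the Hardy bound for Xinf
  have hXinf_le : Xinf ≤ (p/μ)^p * Y := by
    rcases eq_or_lt_of_le hXinfnn with h0 | h0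
    · rw [← h0]
      positivity
    · have hqpos : 0 < Xinf ^ (1/q) := Real.rpow_pos_of_pos h0 _
      have h1 : Xinf ^ (1/p) * Xinf ^ (1/q) ≤ ((p/μ) * Y ^ (1/p)) * Xinf ^ (1/q) := by
        have hs : Xinf ^ (1/p) * Xinf ^ (1/q) = Xinf := by
          rw [← Real.rpow_add h0, one_div, one_div, hpq.inv_add_inv_eq_one, Real.rpow_one]
        calc Xinf ^ (1/p) * Xinf ^ (1/q) = Xinf := hs
          _ ≤ (p / μ) * (Y ^ (1/p) * Xinf ^ (1/q)) := hfinal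
          _ = ((p/μ) * Y ^ (1/p)) * Xinf ^ (1/q) := by ring
      have h2 : Xinf ^ (1/p) ≤ (p/μ) * Y ^ (1/p) := le_of_mul_le_mul_right h1 hqpos
      have h3 := Real.rpow_le_rpow (Real.rpow_nonneg hXinfnn _) h2 hp0.le
      have e1 : (Xinf ^ (1/p)) ^ p = Xinf := by
        rw [← Real.rpow_mul hXinfnn, one_div, inv_mul_cancel₀ hpne, Real.rpow_one]
      have e2 : ((p/μ) * Y ^ (1/p)) ^ p = (p/μ)^p * Y := by
        rw [Real.mul_rpow (by positivity) (Real.rpow_nonneg hYnn _),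
          ← Real.rpow_mul hYnn, one_div, inv_mul_cancel₀ hpne, Real.rpow_one]
      rw [e1, e2] at h3
      exact h3
  -- conclude
  have hptwise : ∀ t ∈ Ioi a, |f t - c| ^ p * Real.exp (μ * t)
      ≤ F t ^ p * Real.exp (μ * t) := fun t ht =>
    mul_le_mul_of_nonneg_right
      (Real.rpow_le_rpow (abs_nonneg _) (hgF t ht.le) hp0.le) (Real.exp_pos _).le
  have hL_le : ∫ t in Ici a, |f t - c| ^ p * Real.exp (μ * t) ≤ Xinf := by
    rw [integral_Ici_eq_integral_Ioi]
    have hmeasL : AEStronglyMeasurable (fun t => |f t - c| ^ p * Real.exp (μ * t))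
        (volume.restrict (Ioi a)) := by
      apply ContinuousOn.aestronglyMeasurable ?_ measurableSet_Ioi
      exact (((hfc.sub continuousOn_const).abs.rpow_const
        (fun x _ => Or.inr hp0.le)).mul hw_cont.continuousOn).mono Ioi_subset_Ici_self
    have hintL : IntegrableOn (fun t => |f t - c| ^ p * Real.exp (μ * t)) (Ioi a) := by
      refine MeasureTheory.Integrable.mono h_int hmeasL ?_
      filter_upwards [ae_restrict_mem measurableSet_Ioi] with t ht
      rw [Real.norm_of_nonneg (by positivity), Real.norm_of_nonneg (hFppos t)]
      exact hptwise t ht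
    exact setIntegral_mono_on hintL h_int measurableSet_Ioi hptwise
  calc ∫ t in Ici a, |f t - c| ^ p * Real.exp (μ * t) ≤ Xinf := hL_le
    _ ≤ (p/μ)^p * Y := hXinf_le
    _ = (p/μ)^p * ∫ t in Ici a, |f' t| ^ p * Real.exp (μ * t) := by
        rw [hYdef, integral_Ici_eq_integral_Ioi]
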